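/- Let C ∈ ℝ^{n₁×n₂×n₃} and D ∈ ℝ^{n₁×l×n₃}, and suppose the equation C⋆X = D is consistent (has at least one solution). Then for any initial tensor X₁ ∈ ℝ^{n₂×l×n₃}, the iteration of Algorithm 2 is well defined as long as the residuals are nonzero (whenever R_k ≠ 0 one has Q_k ≠ 0), and there exists k ≤ n₁·l·n₃ + 1 such that R_k = 0, i.e., C⋆X_k = D; thus Algorithm 2 reaches an exact solution in at most n₁·l·n₃ + 1 iteration steps. -/

import Mathlib

open Matrix Filter Topology

noncomputable section

/-- A third-order real tensor of size `n₁ × n₂ × n₃`, identified with the family of its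
frontal slices indexed by `ZMod n₃`. -/
abbrev Tensor (n₁ n₂ n₃ : ℕ) := ZMod n₃ → Matrix (Fin n₁) (Fin n₂) ℝ

/-- The T-product of third-order tensors: `(C ⋆ D)(k) = ∑ j, C (k - j) * D j`. -/
def tProd {n₁ n₂ l n₃ : ℕ} [NeZero n₃] (C : Tensor n₁ n₂ n₃) (D : Tensor n₂ l n₃) :
    Tensor n₁ l n₃ :=
  fun k => ∑ j : ZMod n₃, C (k - j) * D j

/-- The tensor transpose: `(Cᵀ)(k) = (C (-k))ᵀ`. -/
def tTrans {n₁ n₂ n₃ : ℕ} (C : Tensor n₁ n₂ n₃) : Tensor n₂ n₁ n₃ :=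
  fun k => (C (-k))ᵀ

/-- The matrix trace of the first frontal slice of a tensor with square slices. -/
def trFirst {m n₃ : ℕ} (S : Tensor m m n₃) : ℝ :=
  (S 0).trace

/-- The inner product `⟨C, D⟩ = ∑ k i j, C k i j * D k i j`. -/
def tInner {n₁ n₂ n₃ : ℕ} [NeZero n₃] (C D : Tensor n₁ n₂ n₃) : ℝ :=
  ∑ k : ZMod n₃, ∑ i : Fin n₁, ∑ j : Fin n₂, C k i j * D k i j

/-- The Frobenius norm `‖C‖ = √⟨C, C⟩`. -/
def tNorm {n₁ n₂ n₃ : ℕ} [NeZero n₃] (C : Tensor n₁ n₂ n₃) : ℝ :=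
  Real.sqrt (tInner C C)

/-- The block circulant matrix of a tensor: its `(k, l)` block is `C (k - l)`. -/
def bCirc {n n₃ : ℕ} [NeZero n₃] (C : Tensor n n n₃) :
    Matrix (ZMod n₃ × Fin n) (ZMod n₃ × Fin n) ℝ :=
  fun p q => C (p.1 - q.1) p.2 q.2

/-- `C` is T-symmetric positive definite: `Cᵀ = C` and `bCirc C` is positive definite. -/
def TSymPD {n n₃ : ℕ} [NeZero n₃] (C : Tensor n n n₃) : Prop :=
  tTrans C = C ∧ (bCirc C).PosDef

section Helpers

variable {n₁ n₂ l n₃ : ℕ} [NeZero n₃]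

lemma tInner_comm (A B : Tensor n₁ n₂ n₃) : tInner A B = tInner B A := by
  simp [tInner, mul_comm]

lemma tInner_eq_trace (A B : Tensor n₁ n₂ n₃) :
    tInner A B = ∑ k : ZMod n₃, ((A k)ᵀ * B k).trace := by
  unfold tInner
  refine Finset.sum_congr rfl fun k _ => ?_
  rw [Matrix.trace]
  simp only [Matrix.diag, Matrix.mul_apply, Matrix.transpose_apply]
  rw [Finset.sum_comm]

lemma tInner_add_right (A B B' : Tensor n₁ n₂ n₃) :
    tInner A (B + B') = tInner A B + tInner A B' := by
  simp [tInner, mul_add, Finset.sum_add_distrib]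

lemma tInner_smul_right (c : ℝ) (A B : Tensor n₁ n₂ n₃) :
    tInner A (c • B) = c * tInner A B := by
  simp only [tInner, Finset.mul_sum]
  exact Finset.sum_congr rfl fun k _ => Finset.sum_congr rfl fun i _ =>
    Finset.sum_congr rfl fun j _ => by simp [Pi.smul_apply]; ring

lemma tInner_sub_right (A B B' : Tensor n₁ n₂ n₃) :
    tInner A (B - B') = tInner A B - tInner A B' := by
  simp [tInner, mul_sub, Finset.sum_sub_distrib]

lemma tInner_zero_right (A : Tensor n₁ n₂ n₃) : tInner A 0 = 0 := by simp [tInner]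

lemma tInner_add_left (A A' B : Tensor n₁ n₂ n₃) :
    tInner (A + A') B = tInner A B + tInner A' B := by
  rw [tInner_comm, tInner_add_right, tInner_comm B, tInner_comm B]

lemma tInner_smul_left (c : ℝ) (A B : Tensor n₁ n₂ n₃) :
    tInner (c • A) B = c * tInner A B := by
  rw [tInner_comm, tInner_smul_right, tInner_comm]

lemma tInner_sub_left (A A' B : Tensor n₁ n₂ n₃) :
    tInner (A - A') B = tInner A B - tInner A' B := by
  rw [tInner_comm, tInner_sub_right, tInner_comm B, tInner_comm B]

lemma tInner_zero_left (A : Tensor n₁ n₂ n₃) : tInner 0 A = 0 := by simp [tInner]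

lemma tInner_self_nonneg (A : Tensor n₁ n₂ n₃) : 0 ≤ tInner A A :=
  Finset.sum_nonneg fun k _ => Finset.sum_nonneg fun i _ =>
    Finset.sum_nonneg fun j _ => mul_self_nonneg _

lemma tInner_self_pos {A : Tensor n₁ n₂ n₃} (h : A ≠ 0) : 0 < tInner A A := by
  rcases (tInner_self_nonneg A).lt_or_eq with h' | h'
  · exact h'
  · exfalso; apply h
    have hz : ∀ k i j, A k i j * A k i j = 0 := by
      intro k i j
      have := (Finset.sum_eq_zero_iff_of_nonneg (fun k _ => Finset.sum_nonneg fun i _ =>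
        Finset.sum_nonneg fun j _ => mul_self_nonneg _)).mp h'.symm k (Finset.mem_univ k)
      have := (Finset.sum_eq_zero_iff_of_nonneg (fun i _ => Finset.sum_nonneg fun j _ =>
        mul_self_nonneg _)).mp this i (Finset.mem_univ i)
      exact (Finset.sum_eq_zero_iff_of_nonneg (fun j _ => mul_self_nonneg _)).mp this j
        (Finset.mem_univ j)
    funext k; ext i j
    exact mul_self_eq_zero.mp (hz k i j)

lemma tProd_smul_right (c : ℝ) (C : Tensor n₁ n₂ n₃) (X : Tensor n₂ l n₃) :
    tProd C (c • X) = c • tProd C X := by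
  funext k
  simp [tProd, Matrix.mul_smul, Finset.smul_sum]

lemma tProd_sub_right (C : Tensor n₁ n₂ n₃) (X Y : Tensor n₂ l n₃) :
    tProd C (X - Y) = tProd C X - tProd C Y := by
  funext k
  simp [tProd, Matrix.mul_sub, Finset.sum_sub_distrib]

lemma tInner_adjoint (C : Tensor n₁ n₂ n₃) (Z : Tensor n₂ l n₃) (Y : Tensor n₁ l n₃) :
    tInner (tProd C Z) Y = tInner Z (tProd (tTrans C) Y) := by
  rw [tInner_eq_trace, tInner_eq_trace]
  have lhs : ∀ k : ZMod n₃, ((tProd C Z k)ᵀ * Y k).trace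
      = ∑ m : ZMod n₃, ((Z m)ᵀ * ((C (k - m))ᵀ * Y k)).trace := by
    intro k
    simp only [tProd, Matrix.transpose_sum, Matrix.transpose_mul]
    rw [Matrix.sum_mul]
    simp only [Matrix.trace_sum, Matrix.mul_assoc]
  have rhs : ∀ m : ZMod n₃, ((Z m)ᵀ * tProd (tTrans C) Y m).trace
      = ∑ k : ZMod n₃, ((Z m)ᵀ * ((C (k - m))ᵀ * Y k)).trace := by
    intro m
    simp only [tProd, tTrans, Matrix.mul_sum, Matrix.trace_sum, neg_sub]
  simp only [lhs, rhs]
  exact Finset.sum_comm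

lemma trFirst_eq_tInner (A : Tensor n₁ n₂ n₃) (B : Tensor n₁ n₂ n₃) :
    trFirst (tProd (tTrans A) B) = tInner A B := by
  rw [tInner_eq_trace, trFirst]
  simp [tProd, tTrans, Matrix.trace_sum]

lemma tInner_sum_right {ι : Type*} (s : Finset ι) (A : Tensor n₁ n₂ n₃)
    (f : ι → Tensor n₁ n₂ n₃) :
    tInner A (∑ t ∈ s, f t) = ∑ t ∈ s, tInner A (f t) := by
  classical
  induction s using Finset.induction with
  | empty => simp [tInner]
  | insert _ _ h ih =>
      rw [Finset.sum_insert h, Finset.sum_insert h, ← ih]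
      simp [tInner, mul_add, Finset.sum_add_distrib]

lemma finrank_tensor : Module.finrank ℝ (Tensor n₁ n₂ n₃) = n₃ * (n₁ * n₂) := by
  rw [Module.finrank_pi_fintype]
  simp [Module.finrank_matrix, ZMod.card]

lemma orth_card_le {m : ℕ} (v : Fin m → Tensor n₁ n₂ n₃)
    (hnz : ∀ i, v i ≠ 0) (horth : ∀ i j, i ≠ j → tInner (v i) (v j) = 0) :
    m ≤ n₃ * (n₁ * n₂) := by
  have hli : LinearIndependent ℝ v := by
    rw [Fintype.linearIndependent_iff]
    intro g hg s
    have h0 : tInner (v s) (∑ i : Fin m, g i • v i) = 0 := by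
      rw [hg, tInner_zero_right]
    rw [tInner_sum_right] at h0
    simp only [tInner_smul_right] at h0
    rw [Finset.sum_eq_single s] at h0
    · rcases mul_eq_zero.mp h0 with h | h
      · exact h
      · exact absurd h (tInner_self_pos (hnz s)).ne'
    · intro b _ hb
      rw [horth s b (Ne.symm hb), mul_zero]
    · intro h; exact absurd (Finset.mem_univ s) h
  have := hli.fintype_card_le_finrank
  rwa [Fintype.card_fin, finrank_tensor] at this

end Helpers

theorem stmt_10 (n₁ n₂ l n₃ : ℕ) [NeZero n₃] (C : Tensor n₁ n₂ n₃)
    (D : Tensor n₁ l n₃) (hcons : ∃ X₀ : Tensor n₂ l n₃, tProd C X₀ = D)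
    (X : ℕ → Tensor n₂ l n₃) (R : ℕ → Tensor n₁ l n₃)
    (P Q : ℕ → Tensor n₂ l n₃)
    (hR : ∀ i, 1 ≤ i → R i = D - tProd C (X i))
    (hP : ∀ i, 1 ≤ i → P i = tProd (tTrans C) (R i))
    (hQ1 : Q 1 = P 1)
    (hX : ∀ i, 1 ≤ i → X (i + 1) = X i +
      (tInner (R i) (R i) / tInner (Q i) (Q i)) • Q i)
    (hQ : ∀ i, 1 ≤ i → Q (i + 1) = P (i + 1) -
      (trFirst (tProd (tTrans (P (i + 1))) (Q i)) / tInner (Q i) (Q i)) • Q i)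
    :
    (∀ k, 1 ≤ k → R k ≠ 0 → Q k ≠ 0) ∧
    ∃ k, 1 ≤ k ∧ k ≤ n₁ * l * n₃ + 1 ∧ R k = 0 ∧ tProd C (X k) = D := by
  classical
  obtain ⟨Xs, hXs⟩ := hcons
  -- basic derived identities
  have hRC : ∀ i, 1 ≤ i → R i = tProd C (Xs - X i) := by
    intro i hi
    rw [hR i hi, tProd_sub_right, hXs]
  have hEstep : ∀ i, 1 ≤ i → Xs - X (i + 1)
      = (Xs - X i) - (tInner (R i) (R i) / tInner (Q i) (Q i)) • Q i := by
    intro i hi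
    rw [hX i hi, sub_add_eq_sub_sub]
  have hRstep : ∀ i, 1 ≤ i → R (i + 1)
      = R i - (tInner (R i) (R i) / tInner (Q i) (Q i)) • tProd C (Q i) := by
    intro i hi
    rw [hRC (i + 1) (by omega), hEstep i hi, tProd_sub_right, tProd_smul_right, ← hRC i hi]
  have hadj : ∀ (Z : Tensor n₂ l n₃) i, 1 ≤ i →
      tInner Z (P i) = tInner (tProd C Z) (R i) := by
    intro Z i hi
    rw [hP i hi, ← tInner_adjoint]
  have hPE : ∀ i, 1 ≤ i → tInner (P i) (Xs - X i) = tInner (R i) (R i) := by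
    intro i hi
    rw [tInner_comm, hadj _ i hi, ← hRC i hi]
  have hPQdecomp : ∀ m, 1 ≤ m → P (m + 1) = Q (m + 1) +
      (trFirst (tProd (tTrans (P (m + 1))) (Q m)) / tInner (Q m) (Q m)) • Q m := by
    intro m hm
    rw [hQ m hm, sub_add_cancel]
  -- the master induction
  have key : ∀ k, 1 ≤ k → (∀ i, 1 ≤ i → i ≤ k → R i ≠ 0) →
      (∀ i, 1 ≤ i → i ≤ k → Q i ≠ 0) ∧
      (∀ i j, 1 ≤ i → i < j → j ≤ k → tInner (R i) (R j) = 0) ∧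
      (∀ i j, 1 ≤ i → i < j → j ≤ k → tInner (Q i) (Q j) = 0) ∧
      (∀ i, 1 ≤ i → i ≤ k → tInner (Q i) (Xs - X (i + 1)) = 0) := by
    intro k hk
    induction k, hk using Nat.le_induction with
    | base =>
        intro hRall
        have hR1 : R 1 ≠ 0 := hRall 1 le_rfl le_rfl
        have hP1E : tInner (P 1) (Xs - X 1) = tInner (R 1) (R 1) := hPE 1 le_rfl
        have hQ1ne : Q 1 ≠ 0 := by
          intro h0
          rw [← hQ1, h0, tInner_zero_left] at hP1E
          exact (tInner_self_pos hR1).ne' hP1E.symm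
        refine ⟨?_, ?_, ?_, ?_⟩
        · intro i h1 h2
          have : i = 1 := by omega
          subst this; exact hQ1ne
        · intro i j h1 h2 h3; omega
        · intro i j h1 h2 h3; omega
        · intro i h1 h2
          have : i = 1 := by omega
          subst this
          rw [hEstep 1 le_rfl, tInner_sub_right, tInner_smul_right, hQ1, hP1E,
            div_mul_cancel₀ _ (by rw [← hQ1]; exact (tInner_self_pos hQ1ne).ne'), sub_self]
    | succ k hk ih =>
        intro hRall
        have hRk' : ∀ i, 1 ≤ i → i ≤ k → R i ≠ 0 := fun i h1 h2 =>
          hRall i h1 (Nat.le_succ_of_le h2)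
        obtain ⟨hQne, hRR, hQQ, hE⟩ := ih hRk'
        have hQQ' : ∀ i j, 1 ≤ i → 1 ≤ j → i ≤ k → j ≤ k → i ≠ j →
            tInner (Q i) (Q j) = 0 := by
          intro i j h1 h2 h3 h4 h5
          rcases lt_or_gt_of_ne h5 with h | h
          · exact hQQ i j h1 h h4
          · rw [tInner_comm]; exact hQQ j i h2 h h3
        have hQself : ∀ i, 1 ≤ i → i ≤ k → tInner (Q i) (Q i) ≠ 0 := fun i h1 h2 =>
          (tInner_self_pos (hQne i h1 h2)).ne'
        -- ⟨Q k, P i⟩ = ⟨Q k, Q i⟩ for i ≤ k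
        have hQkP : ∀ i, 1 ≤ i → i ≤ k → tInner (Q k) (P i) = tInner (Q k) (Q i) := by
          intro i h1 h2
          match i, h1 with
          | 1, _ => rw [← hQ1]
          | (m + 2), _ =>
            have hm : 1 ≤ m + 1 := by omega
            rw [hPQdecomp (m + 1) hm, tInner_add_right, tInner_smul_right,
              hQQ' k (m + 1) hk hm le_rfl (by omega) (by omega), mul_zero, add_zero]
        -- new R-orthogonality
        have hRRnew : ∀ i, 1 ≤ i → i ≤ k → tInner (R i) (R (k + 1)) = 0 := by
          intro i h1 h2
          rw [hRstep k hk, tInner_sub_right, tInner_smul_right]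
          have hadj2 : tInner (R i) (tProd C (Q k)) = tInner (Q k) (P i) := by
            rw [tInner_comm, hadj (Q k) i h1]
          rw [hadj2, hQkP i h1 h2]
          rcases eq_or_lt_of_le h2 with h | h
          · subst h
            rw [div_mul_cancel₀ _ (hQself i h1 le_rfl), sub_self]
          · rw [hQQ' k i hk h1 le_rfl h.le (by omega), mul_zero, sub_zero]
            exact hRR i k h1 h le_rfl
        have hRRnew' : ∀ i j, 1 ≤ i → i < j → j ≤ k + 1 → tInner (R i) (R j) = 0 := by
          intro i j h1 h2 h3
          rcases eq_or_lt_of_le h3 with h | h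
          · subst h; exact hRRnew i h1 (by omega)
          · exact hRR i j h1 h2 (by omega)
        have hβ : trFirst (tProd (tTrans (P (k + 1))) (Q k)) = tInner (P (k + 1)) (Q k) :=
          trFirst_eq_tInner _ _
        have hEk : tInner (Q k) (Xs - X (k + 1)) = 0 := hE k hk le_rfl
        have hPk1E : tInner (P (k + 1)) (Xs - X (k + 1)) = tInner (R (k + 1)) (R (k + 1)) :=
          hPE (k + 1) (by omega)
        have hQk1E : tInner (Q (k + 1)) (Xs - X (k + 1)) = tInner (R (k + 1)) (R (k + 1)) := by
          rw [hPQdecomp k hk, tInner_add_left, tInner_smul_left, hEk, mul_zero,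
            add_zero] at hPk1E
          exact hPk1E
        have hRk1ne : R (k + 1) ≠ 0 := hRall (k + 1) (by omega) le_rfl
        have hQk1ne : Q (k + 1) ≠ 0 := by
          intro h0
          rw [h0, tInner_zero_left] at hQk1E
          exact (tInner_self_pos hRk1ne).ne' hQk1E.symm
        -- new Q-orthogonality
        have hQQnew : ∀ i, 1 ≤ i → i ≤ k → tInner (Q i) (Q (k + 1)) = 0 := by
          intro i h1 h2
          rw [tInner_comm, hQ k hk, tInner_sub_left, tInner_smul_left, hβ]
          rcases eq_or_lt_of_le h2 with h | h
          · subst h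
            rw [div_mul_cancel₀ _ (hQself i h1 le_rfl), sub_self]
          · rw [hQQ' k i hk h1 le_rfl h.le (by omega), mul_zero, sub_zero]
            rw [tInner_comm, hadj (Q i) (k + 1) (by omega)]
            have hα : tInner (R i) (R i) / tInner (Q i) (Q i) ≠ 0 :=
              div_ne_zero (tInner_self_pos (hRk' i h1 h.le)).ne' (hQself i h1 h.le)
            have hsmul : (tInner (R i) (R i) / tInner (Q i) (Q i)) • tProd C (Q i)
                = R i - R (i + 1) := by
              rw [hRstep i h1, sub_sub_cancel]
            have hmul : (tInner (R i) (R i) / tInner (Q i) (Q i)) *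
                tInner (tProd C (Q i)) (R (k + 1)) = 0 := by
              rw [← tInner_smul_left, hsmul, tInner_sub_left,
                hRRnew i h1 h.le, hRRnew (i + 1) (by omega) (by omega), sub_self]
            exact (mul_eq_zero.mp hmul).resolve_left hα
        -- new E identity
        have hEnew : tInner (Q (k + 1)) (Xs - X (k + 1 + 1)) = 0 := by
          rw [hEstep (k + 1) (by omega), tInner_sub_right, tInner_smul_right, hQk1E,
            div_mul_cancel₀ _ (tInner_self_pos hQk1ne).ne', sub_self]
        refine ⟨?_, hRRnew', ?_, ?_⟩
        · intro i h1 h2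
          rcases eq_or_lt_of_le h2 with h | h
          · subst h; exact hQk1ne
          · exact hQne i h1 (by omega)
        · intro i j h1 h2 h3
          rcases eq_or_lt_of_le h3 with h | h
          · subst h; exact hQQnew i h1 (by omega)
          · exact hQQ i j h1 h2 (by omega)
        · intro i h1 h2
          rcases eq_or_lt_of_le h2 with h | h
          · subst h; exact hEnew
          · exact hE i h1 (by omega)
  -- residuals stay zero once zero
  have hmono : ∀ i j, 1 ≤ i → i ≤ j → R i = 0 → R j = 0 := by
    intro i j h1 h2 h0
    induction j, h2 using Nat.le_induction with
    | base => exact h0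
    | succ j hj ihj =>
        rw [hRstep j (le_trans h1 hj), ihj]
        simp [tInner]
  constructor
  · intro k hk hRkne
    have hall : ∀ i, 1 ≤ i → i ≤ k → R i ≠ 0 := by
      intro i h1 h2 h0
      exact hRkne (hmono i k h1 h2 h0)
    exact (key k hk hall).1 k hk le_rfl
  · by_cases hex : ∃ k, 1 ≤ k ∧ k ≤ n₁ * l * n₃ + 1 ∧ R k = 0
    · obtain ⟨k, h1, h2, h0⟩ := hex
      refine ⟨k, h1, h2, h0, ?_⟩
      have := hR k h1
      rw [h0] at this
      exact (sub_eq_zero.mp this.symm).symm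
    · exfalso
      push_neg at hex
      obtain ⟨-, hRR, -, -⟩ := key (n₁ * l * n₃ + 1) (by omega)
        (fun i h1 h2 => hex i h1 h2)
      have hb := orth_card_le (n₁ := n₁) (n₂ := l) (n₃ := n₃)
        (fun t : Fin (n₁ * l * n₃ + 1) => R (t.1 + 1))
        (fun t => hex (t.1 + 1) (by omega) (by omega))
        (by
          intro i j hij
          rcases lt_or_gt_of_ne (fun h : i.1 = j.1 => hij (Fin.ext h)) with h | h
          · exact hRR (i.1 + 1) (j.1 + 1) (by omega) (by omega) (by omega)
          · rw [tInner_comm]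
            exact hRR (j.1 + 1) (i.1 + 1) (by omega) (by omega) (by omega))
      have heq : n₃ * (n₁ * l) = n₁ * l * n₃ := by ring
      omega
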